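/- Let S = (β, γ) be a standard symbol and j ≥ 2 an integer with j ∈ β ∩ γ and j−1 ∉ β ∪ γ. Let S′ be the symbol obtained from S by replacing the occurrence of j in β and the occurrence of j in γ both by j−1. Then S′ is standard and has the same pairs as S; the map which replaces both occurrences of j−1 by j is a bijection Σ′ ↦ Σ from C(S′) to C(S) with n(Σ) = n(Σ′); and f_{j−1}² u_{Σ′} = (v + v^{−1}) u_Σ for every Σ′ ∈ C(S′). Consequently f_{j−1}^{(2)} b_{S′} = b_S. -/

import Mathlib

namespace LM2003

open scoped BigOperators

/-- `(β, γ)` is a symbol in `Sy(n,k,r)`: two finite sets of integers contained in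
`{1, …, n+1}`, of cardinalities `k+r` and `k` (rows are identified with the subsets
they enumerate; strict increase is automatic). -/
def IsSymbol (n k r : ℕ) (β γ : Finset ℤ) : Prop :=
  β ⊆ Finset.Icc 1 ((n : ℤ) + 1) ∧ γ ⊆ Finset.Icc 1 ((n : ℤ) + 1) ∧
    β.card = k + r ∧ γ.card = k

/-- `(β,γ)` is standard: for each `i < |γ|`, the `i`-th smallest element of `β`
is `≤` the `i`-th smallest element of `γ`. -/
def IsStandard (β γ : Finset ℤ) : Prop :=
  ∀ i : ℕ, i < γ.card → (β.sort (· ≤ ·))[i]! ≤ (γ.sort (· ≤ ·))[i]!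

/-- Accumulated data after level `l` of the recursive definition of `ψ`:
the first component is `γ⁰ ∪ ⋯ ∪ γ^l` and the second is `ψ(γ⁰ ∪ ⋯ ∪ γ^l)`. -/
def psiAcc (β γ : Finset ℤ) : ℕ → Finset ℤ × Finset ℤ
  | 0 => (γ ∩ β, γ ∩ β)
  | l + 1 =>
    let p := psiAcc β γ l
    let g := (γ \ p.1).filter fun j => j - ((l : ℤ) + 1) ∈ β \ p.2
    (p.1 ∪ g, p.2 ∪ g.image fun j => j - ((l : ℤ) + 1))

/-- The level sets `γ^l` in the recursive definition of `ψ`. -/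
def gammaL (β γ : Finset ℤ) : ℕ → Finset ℤ
  | 0 => γ ∩ β
  | l + 1 =>
    (γ \ (psiAcc β γ l).1).filter fun j => j - ((l : ℤ) + 1) ∈ β \ (psiAcc β γ l).2

open Classical in
/-- The map `ψ` : for `j ∈ γ^l` it is `j ↦ j - l` (via the least such `l`),
and the identity elsewhere. -/
noncomputable def psiS (β γ : Finset ℤ) (j : ℤ) : ℤ :=
  if h : ∃ l, j ∈ gammaL β γ l then j - (Nat.find h : ℤ) else j

/-- The pairs of a (standard) symbol: the pairs `(j, ψ(j))` with `j ∈ γ` and `ψ(j) ≠ j`. -/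
noncomputable def pairsS (β γ : Finset ℤ) : Finset (ℤ × ℤ) :=
  (γ.filter fun j => psiS β γ j ≠ j).image fun j => (j, psiS β γ j)

/-- Exchanging, for every pair in `T`, the two members between the two rows of `(β,γ)`
(reordering of rows is automatic for sets). Pairs are written `(j, ψ j)` with `j` in the
bottom row `γ` and `ψ j` in the top row `β`. -/
def swapSymbol (β γ : Finset ℤ) (T : Finset (ℤ × ℤ)) : Finset ℤ × Finset ℤ :=
  ((β \ T.image Prod.snd) ∪ T.image Prod.fst,
   (γ \ T.image Prod.fst) ∪ T.image Prod.snd)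

/-- The class `C(S)` of a standard symbol: all symbols obtained by permuting a subset
of its pairs. -/
noncomputable def CSet (β γ : Finset ℤ) : Finset (Finset ℤ × Finset ℤ) :=
  (pairsS β γ).powerset.image (swapSymbol β γ)

/-- The Fock space `F(Λ)`: free `ℚ(v)`-module on the set of all symbols. -/
abbrev FF : Type := (Finset ℤ × Finset ℤ) →₀ RatFunc ℚ

/-- Standard basis vector `u_S`. -/
noncomputable def uS (S : Finset ℤ × Finset ℤ) : FF := Finsupp.single S 1

/-- The variable `v` of `K = ℚ(v)`. -/
noncomputable def vv : RatFunc ℚ := RatFunc.X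

/-- Action of the Chevalley generator `f_j` on the standard basis vector `u_S`. -/
noncomputable def fAct (j : ℤ) (S : Finset ℤ × Finset ℤ) : FF :=
  (if j ∈ S.2 ∧ j + 1 ∉ S.2 then uS (S.1, insert (j + 1) (S.2.erase j)) else 0) +
  (if j ∈ S.1 ∧ j + 1 ∉ S.1 then
      vv ^ ((if j ∈ S.2 then (1 : ℤ) else 0) - (if j + 1 ∈ S.2 then (1 : ℤ) else 0)) •
        uS (insert (j + 1) (S.1.erase j), S.2)
    else 0)

/-- The Chevalley generator `f_j` as a linear operator on `F`. -/
noncomputable def fLin (j : ℤ) : FF →ₗ[RatFunc ℚ] FF :=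
  Finsupp.lsum (RatFunc ℚ) fun S => LinearMap.toSpanSingleton (RatFunc ℚ) FF (fAct j S)

/-- Divided powers: `f_j^{(1)} = f_j`, `f_j^{(2)} = f_j² / (v + v⁻¹)`. -/
noncomputable def fDiv (j : ℤ) (m : ℕ) : FF →ₗ[RatFunc ℚ] FF :=
  if m = 2 then (vv + vv⁻¹)⁻¹ • (fLin j ∘ₗ fLin j) else fLin j

/-- `b_S = Σ_{Σ ∈ C(S)} v^{n(Σ)} u_Σ`, written as a sum over the subsets `T` of the
set of pairs of `S` (with `n(Σ) = |T|`). -/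
noncomputable def bS (β γ : Finset ℤ) : FF :=
  ∑ T ∈ (pairsS β γ).powerset, vv ^ T.card • uS (swapSymbol β γ T)

/-- `ι` is an involution of the finite set `Z`. -/
def IsInvolutionOn (Z : Finset ℤ) (ι : ℤ → ℤ) : Prop :=
  (∀ z ∈ Z, ι z ∈ Z) ∧ ∀ z ∈ Z, ι (ι z) = z

/-- `z < z'` are consecutive elements of `Z`. -/
def ConsecutiveIn (Z : Finset ℤ) (z z' : ℤ) : Prop :=
  z ∈ Z ∧ z' ∈ Z ∧ z < z' ∧ ∀ x ∈ Z, ¬(z < x ∧ x < z')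

/-- `r`-admissible involutions of a finite set `Z` of integers: `ι` is an involution of
`Z` with exactly `r` fixed points, and either `|Z| = r`, or there are two consecutive
elements `z < z'` of `Z` with `ι z = z'` whose removal again yields an `r`-admissible
involution. -/
inductive IsAdmissible (r : ℕ) : Finset ℤ → (ℤ → ℤ) → Prop
  | base (Z : Finset ℤ) (ι : ℤ → ℤ) (hinv : IsInvolutionOn Z ι)
      (hfix : (Z.filter fun z => ι z = z).card = r) (hcard : Z.card = r) :
      IsAdmissible r Z ι
  | step (Z : Finset ℤ) (ι : ℤ → ℤ) (z z' : ℤ) (hinv : IsInvolutionOn Z ι)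
      (hfix : (Z.filter fun w => ι w = w).card = r)
      (hcons : ConsecutiveIn Z z z') (hzz : ι z = z')
      (hrec : IsAdmissible r (Z \ {z, z'}) ι) :
      IsAdmissible r Z ι

/-- `c_j(S)`: number of occurrences of `j` among the entries of the symbol `(β,γ)`. -/
def contentS (β γ : Finset ℤ) (j : ℤ) : ℕ :=
  (if j ∈ β then 1 else 0) + (if j ∈ γ then 1 else 0)

/-- case (a) of the proof of Theorem 2.1. If `j ∈ β ∩ γ`, `j ≥ 2` and
`j-1 ∉ β ∪ γ`, and `S'` is obtained from `S` by changing both occurrences of `j` into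
`j-1`, then `S'` is a standard symbol with the same pairs as `S`, replacing both
occurrences of `j-1` by `j` is a bijection from `C(S')` to `C(S)` preserving `n(·)`,
`f_{j-1}² u_{Σ'} = (v+v⁻¹) u_Σ` for all `Σ' ∈ C(S')`, and `f_{j-1}^{(2)} b_{S'} = b_S`. -/

lemma getBang {α : Type*} [Inhabited α] (l : List α) (i : ℕ) (h : i < l.length) :
    l[i]! = l[i] := getElem!_pos l i h

def shiftF (j : ℤ) : ℤ → ℤ := fun x => if x = j then j - 1 else x

lemma image_shift (s : Finset ℤ) (j : ℤ) (hj : j ∈ s) (h1 : j - 1 ∉ s) :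
    s.image (shiftF j) = insert (j-1) (s.erase j) := by
  ext x
  simp only [Finset.mem_image, Finset.mem_insert, Finset.mem_erase, shiftF]
  constructor
  · rintro ⟨a, ha, rfl⟩
    by_cases h : a = j
    · simp [h]
    · refine Or.inr ?_
      rw [if_neg h]
      exact ⟨h, ha⟩
  · rintro (rfl | ⟨hx, hxs⟩)
    · exact ⟨j, hj, by simp⟩
    · exact ⟨x, hxs, by simp [hx]⟩

lemma sort_shift (s : Finset ℤ) (j : ℤ) (hj : j ∈ s) (h1 : j - 1 ∉ s) :
    (insert (j-1) (s.erase j)).sort (· ≤ ·) = (s.sort (· ≤ ·)).map (shiftF j) := by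
  have hmono : ∀ x ∈ s, ∀ y ∈ s, x < y → shiftF j x < shiftF j y := by
    intro x hx y hy hxy
    by_cases hxj : x = j
    · have hyy : y ≠ j := by omega
      simp only [shiftF, if_pos hxj, if_neg hyy]; omega
    · by_cases hyj : y = j
      · have hx1 : x ≠ j - 1 := fun e => h1 (e ▸ hx)
        simp only [shiftF, if_neg hxj, if_pos hyj]; omega
      · simp only [shiftF, if_neg hxj, if_neg hyj]; exact hxy
  have hsorted : List.Pairwise (· < ·) ((s.sort (· ≤ ·)).map (shiftF j)) := by
    rw [List.pairwise_map]
    refine List.Pairwise.imp_of_mem ?_ ((Finset.sortedLT_sort s).pairwise)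
    intro a b ha hb hab
    exact hmono a (by rwa [← Finset.mem_sort (α := ℤ) (· ≤ ·)]) b
      (by rwa [← Finset.mem_sort (α := ℤ) (· ≤ ·)]) hab
  have hnodup : ((s.sort (· ≤ ·)).map (shiftF j)).Nodup :=
    hsorted.imp (fun h => ne_of_lt h)
  refine List.Perm.eq_of_pairwise' (Finset.pairwise_sort _ _) (hsorted.imp le_of_lt) ?_
  refine List.perm_of_nodup_nodup_toFinset_eq (Finset.sort_nodup _ _) hnodup ?_
  rw [← image_shift s j hj h1]
  ext x
  simp [List.mem_map, Finset.mem_image]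

section Key
variable {β γ : Finset ℤ} {j : ℤ}
  (hjβ : j ∈ β) (hjγ : j ∈ γ) (h1β : j - 1 ∉ β) (h1γ : j - 1 ∉ γ)

include hjβ hjγ h1β h1γ

lemma inter_prime :
    (insert (j-1) (γ.erase j)) ∩ (insert (j-1) (β.erase j))
      = insert (j-1) ((γ ∩ β).erase j) := by
  ext x
  have h2 : x ∈ γ → x ≠ j - 1 := fun hx e => h1γ (e ▸ hx)
  simp only [Finset.mem_inter, Finset.mem_insert, Finset.mem_erase]
  tauto

lemma psiAcc_key (l : ℕ) :
    ∃ A B : Finset ℤ, A ⊆ γ.erase j ∧ B ⊆ β.erase j ∧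
      psiAcc β γ l = (insert j A, insert j B) ∧
      psiAcc (insert (j-1) (β.erase j)) (insert (j-1) (γ.erase j)) l
        = (insert (j-1) A, insert (j-1) B) := by
  induction l with
  | zero =>
    refine ⟨(γ ∩ β).erase j, (γ ∩ β).erase j, ?_, ?_, ?_, ?_⟩
    · intro x hx
      simp only [Finset.mem_erase, Finset.mem_inter] at hx ⊢; tauto
    · intro x hx
      simp only [Finset.mem_erase, Finset.mem_inter] at hx ⊢; tauto
    · have : γ ∩ β = insert j ((γ ∩ β).erase j) :=
        (Finset.insert_erase (Finset.mem_inter.mpr ⟨hjγ, hjβ⟩)).symm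
      simp only [psiAcc]; rw [← this]
    · simp only [psiAcc]; rw [inter_prime hjβ hjγ h1β h1γ]
  | succ l ih =>
    obtain ⟨A, B, hA, hB, h1, h2⟩ := ih
    have hE1 : γ \ insert j A = (γ.erase j) \ A := by
      ext x
      simp only [Finset.mem_sdiff, Finset.mem_insert, Finset.mem_erase]; tauto
    have hE2 : β \ insert j B = (β.erase j) \ B := by
      ext x
      simp only [Finset.mem_sdiff, Finset.mem_insert, Finset.mem_erase]; tauto
    have hE1' : (insert (j-1) (γ.erase j)) \ insert (j-1) A = (γ.erase j) \ A := by
      ext x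
      have h2 : x ∈ γ → x ≠ j - 1 := fun hx e => h1γ (e ▸ hx)
      simp only [Finset.mem_sdiff, Finset.mem_insert, Finset.mem_erase]; tauto
    have hE2' : (insert (j-1) (β.erase j)) \ insert (j-1) B = (β.erase j) \ B := by
      ext x
      have h2 : x ∈ β → x ≠ j - 1 := fun hx e => h1β (e ▸ hx)
      simp only [Finset.mem_sdiff, Finset.mem_insert, Finset.mem_erase]; tauto
    set g : Finset ℤ :=
      ((γ.erase j) \ A).filter (fun x => x - ((l : ℤ) + 1) ∈ (β.erase j) \ B) with hg
    have hgγ : g ⊆ γ.erase j := fun x hx => by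
      rw [hg] at hx
      exact (Finset.mem_sdiff.mp (Finset.mem_filter.mp hx).1).1
    have hgβ : ∀ x ∈ g, x - ((l : ℤ) + 1) ∈ β.erase j := fun x hx => by
      rw [hg] at hx
      exact (Finset.mem_sdiff.mp (Finset.mem_filter.mp hx).2).1
    refine ⟨A ∪ g, B ∪ g.image (fun x => x - ((l : ℤ) + 1)), ?_, ?_, ?_, ?_⟩
    · exact Finset.union_subset hA hgγ
    · refine Finset.union_subset hB ?_
      intro y hy
      obtain ⟨x, hx, rfl⟩ := Finset.mem_image.mp hy
      exact hgβ x hx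
    · simp only [psiAcc, h1, hE1, hE2, ← hg, Finset.insert_union]
    · simp only [psiAcc, h2, hE1', hE2', ← hg, Finset.insert_union]

lemma gammaL_succ (l : ℕ) :
    gammaL β γ (l+1) = gammaL (insert (j-1) (β.erase j)) (insert (j-1) (γ.erase j)) (l+1) ∧
    gammaL β γ (l+1) ⊆ γ.erase j ∧
    ∀ x ∈ gammaL β γ (l+1), x - ((l : ℤ) + 1) ∈ β.erase j := by
  obtain ⟨A, B, hA, hB, h1, h2⟩ := psiAcc_key hjβ hjγ h1β h1γ l
  have hE1 : γ \ insert j A = (γ.erase j) \ A := by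
    ext x
    simp only [Finset.mem_sdiff, Finset.mem_insert, Finset.mem_erase]; tauto
  have hE2 : β \ insert j B = (β.erase j) \ B := by
    ext x
    simp only [Finset.mem_sdiff, Finset.mem_insert, Finset.mem_erase]; tauto
  have hE1' : (insert (j-1) (γ.erase j)) \ insert (j-1) A = (γ.erase j) \ A := by
    ext x
    have h2 : x ∈ γ → x ≠ j - 1 := fun hx e => h1γ (e ▸ hx)
    simp only [Finset.mem_sdiff, Finset.mem_insert, Finset.mem_erase]; tauto
  have hE2' : (insert (j-1) (β.erase j)) \ insert (j-1) B = (β.erase j) \ B := by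
    ext x
    have h2 : x ∈ β → x ≠ j - 1 := fun hx e => h1β (e ▸ hx)
    simp only [Finset.mem_sdiff, Finset.mem_insert, Finset.mem_erase]; tauto
  refine ⟨?_, ?_, ?_⟩
  · simp only [gammaL, h1, h2, hE1, hE2, hE1', hE2']
  · intro x hx
    simp only [gammaL, h1, hE1, hE2] at hx
    exact (Finset.mem_sdiff.mp (Finset.mem_filter.mp hx).1).1
  · intro x hx
    simp only [gammaL, h1, hE1, hE2] at hx
    exact (Finset.mem_sdiff.mp (Finset.mem_filter.mp hx).2).1

lemma mem_gammaL_iff {x : ℤ} (hx : x ≠ j) (hx1 : x ≠ j - 1) (l : ℕ) :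
    x ∈ gammaL β γ l ↔
      x ∈ gammaL (insert (j-1) (β.erase j)) (insert (j-1) (γ.erase j)) l := by
  cases l with
  | zero =>
    show x ∈ γ ∩ β ↔ x ∈ _ ∩ _
    rw [inter_prime hjβ hjγ h1β h1γ]
    simp only [Finset.mem_inter, Finset.mem_insert, Finset.mem_erase]
    tauto
  | succ l => rw [(gammaL_succ hjβ hjγ h1β h1γ l).1]

lemma psiS_congr {x : ℤ} (hx : x ≠ j) (hx1 : x ≠ j - 1) :
    psiS (insert (j-1) (β.erase j)) (insert (j-1) (γ.erase j)) x = psiS β γ x := by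
  unfold psiS
  by_cases h : ∃ l, x ∈ gammaL β γ l
  · have h' : ∃ l, x ∈ gammaL (insert (j-1) (β.erase j)) (insert (j-1) (γ.erase j)) l :=
      ⟨h.choose, (mem_gammaL_iff hjβ hjγ h1β h1γ hx hx1 _).mp h.choose_spec⟩
    rw [dif_pos h', dif_pos h]
    have : Nat.find h' = Nat.find h :=
      le_antisymm
        (Nat.find_le ((mem_gammaL_iff hjβ hjγ h1β h1γ hx hx1 _).mp (Nat.find_spec h)))
        (Nat.find_le ((mem_gammaL_iff hjβ hjγ h1β h1γ hx hx1 _).mpr (Nat.find_spec h')))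
    rw [this]
  · have h' : ¬ ∃ l, x ∈ gammaL (insert (j-1) (β.erase j)) (insert (j-1) (γ.erase j)) l :=
      fun ⟨l, hl⟩ => h ⟨l, (mem_gammaL_iff hjβ hjγ h1β h1γ hx hx1 _).mpr hl⟩
    rw [dif_neg h', dif_neg h]

lemma psiS_j : psiS β γ j = j := by
  unfold psiS
  have h : ∃ l, j ∈ gammaL β γ l := ⟨0, Finset.mem_inter.mpr ⟨hjγ, hjβ⟩⟩
  rw [dif_pos h]
  have : Nat.find h = 0 := Nat.find_eq_zero h |>.mpr (Finset.mem_inter.mpr ⟨hjγ, hjβ⟩)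
  rw [this]; ring

lemma psiS_j1 :
    psiS (insert (j-1) (β.erase j)) (insert (j-1) (γ.erase j)) (j-1) = j - 1 := by
  unfold psiS
  have hm : j - 1 ∈ (insert (j-1) (γ.erase j)) ∩ (insert (j-1) (β.erase j)) := by
    rw [inter_prime hjβ hjγ h1β h1γ]; exact Finset.mem_insert_self _ _
  have h : ∃ l, j - 1 ∈ gammaL (insert (j-1) (β.erase j)) (insert (j-1) (γ.erase j)) l :=
    ⟨0, hm⟩
  rw [dif_pos h]
  have : Nat.find h = 0 := Nat.find_eq_zero h |>.mpr hm
  rw [this]; ring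

lemma psiS_mem {x : ℤ} (hx : x ∈ γ) (hne : psiS β γ x ≠ x) :
    x ∈ γ.erase j ∧ psiS β γ x ∈ β.erase j := by
  have h : ∃ l, x ∈ gammaL β γ l := by
    by_contra h
    exact hne (by unfold psiS; rw [dif_neg h])
  have hval : psiS β γ x = x - (Nat.find h : ℤ) := by
    unfold psiS; rw [dif_pos h]
  have hpos : Nat.find h ≠ 0 := by
    intro h0
    exact hne (by rw [hval, h0]; push_cast; ring)
  obtain ⟨m, hm⟩ : ∃ m, Nat.find h = m + 1 :=
    ⟨Nat.find h - 1, (Nat.succ_pred_eq_of_pos (Nat.pos_of_ne_zero hpos)).symm⟩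
  have hxm : x ∈ gammaL β γ (m+1) := hm ▸ Nat.find_spec h
  obtain ⟨-, hsub, hmem⟩ := gammaL_succ hjβ hjγ h1β h1γ m
  refine ⟨hsub hxm, ?_⟩
  rw [hval, hm]
  push_cast
  exact hmem x hxm

lemma pairsS_prime :
    pairsS (insert (j-1) (β.erase j)) (insert (j-1) (γ.erase j)) = pairsS β γ := by
  unfold pairsS
  have hγ' : ∀ x ∈ γ.erase j, x ≠ j ∧ x ≠ j - 1 := by
    intro x hx
    have := Finset.mem_erase.mp hx
    exact ⟨this.1, fun e => h1γ (e ▸ this.2)⟩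
  have e1 : (insert (j-1) (γ.erase j)).filter
      (fun x => psiS (insert (j-1) (β.erase j)) (insert (j-1) (γ.erase j)) x ≠ x)
      = (γ.erase j).filter (fun x => psiS β γ x ≠ x) := by
    rw [Finset.filter_insert, if_neg (by simp [psiS_j1 hjβ hjγ h1β h1γ])]
    refine Finset.filter_congr ?_
    intro x hx
    rw [psiS_congr hjβ hjγ h1β h1γ (hγ' x hx).1 (hγ' x hx).2]
  have e2 : γ.filter (fun x => psiS β γ x ≠ x)
      = (γ.erase j).filter (fun x => psiS β γ x ≠ x) := by
    ext x
    simp only [Finset.mem_filter, Finset.mem_erase]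
    constructor
    · rintro ⟨hx, hne⟩
      refine ⟨⟨?_, hx⟩, hne⟩
      rintro rfl
      exact hne (psiS_j hjβ hjγ h1β h1γ)
    · rintro ⟨⟨-, hx⟩, hne⟩; exact ⟨hx, hne⟩
  rw [e1, e2]
  refine Finset.image_congr ?_
  intro x hx
  have hx' : x ∈ γ.erase j := (Finset.mem_filter.mp (Finset.mem_coe.mp hx)).1
  show (x, _) = (x, _)
  rw [psiS_congr hjβ hjγ h1β h1γ (hγ' x hx').1 (hγ' x hx').2]

lemma pairsS_avoid {p : ℤ × ℤ} (hp : p ∈ pairsS β γ) :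
    p.1 ≠ j ∧ p.1 ≠ j - 1 ∧ p.2 ≠ j ∧ p.2 ≠ j - 1 := by
  obtain ⟨x, hx, rfl⟩ := Finset.mem_image.mp hp
  obtain ⟨hxγ, hne⟩ := Finset.mem_filter.mp hx
  obtain ⟨h1, h2⟩ := psiS_mem hjβ hjγ h1β h1γ hxγ hne
  have h1' := Finset.mem_erase.mp h1
  have h2' := Finset.mem_erase.mp h2
  exact ⟨h1'.1, fun e => h1γ (e ▸ h1'.2), h2'.1, fun e => h1β (e ▸ h2'.2)⟩

end Key


lemma card_shift (s : Finset ℤ) (j : ℤ) (hj : j ∈ s) (h1 : j - 1 ∉ s) :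
    (insert (j-1) (s.erase j)).card = s.card := by
  rw [Finset.card_insert_of_notMem (fun h => h1 (Finset.mem_of_mem_erase h)),
    Finset.card_erase_add_one hj]

lemma recovery (s : Finset ℤ) (j : ℤ) (hj : j ∉ s) (h1 : j - 1 ∈ s) :
    insert (j-1) ((insert j (s.erase (j-1))).erase j) = s := by
  rw [Finset.erase_insert (fun h => hj (Finset.mem_of_mem_erase h)),
    Finset.insert_erase h1]

lemma fLin_uS (i : ℤ) (S : Finset ℤ × Finset ℤ) : fLin i (uS S) = fAct i S := by
  simp [fLin, uS]

lemma vv_add_inv_ne : vv + vv⁻¹ ≠ 0 := by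
  intro h
  have hX : vv ≠ 0 := RatFunc.X_ne_zero
  have h2 : vv * vv + 1 = 0 := by
    have := congrArg (vv * ·) h
    simpa [mul_add, mul_inv_cancel₀ hX] using this
  have h3 : (algebraMap (Polynomial ℚ) (RatFunc ℚ)) (Polynomial.X * Polynomial.X + 1) = 0 := by
    rw [map_add, map_mul, map_one, RatFunc.algebraMap_X]
    exact h2
  have h4 : (Polynomial.X * Polynomial.X + 1 : Polynomial ℚ) ≠ 0 := by
    intro he
    have := congrArg (Polynomial.eval 0) he
    simp at this
  exact h4 (RatFunc.algebraMap_injective ℚ (by rw [h3, map_zero]))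

lemma double_act (i : ℤ) (S : Finset ℤ × Finset ℤ) (hiB : i ∈ S.1) (hiG : i ∈ S.2)
    (h1B : i + 1 ∉ S.1) (h1G : i + 1 ∉ S.2) :
    fLin i (fLin i (uS S)) =
      (vv + vv⁻¹) • uS (insert (i+1) (S.1.erase i), insert (i+1) (S.2.erase i)) := by
  obtain ⟨B, G⟩ := S
  simp only at hiB hiG h1B h1G ⊢
  have hii : i ≠ i + 1 := by omega
  set B1 := insert (i+1) (B.erase i) with hB1
  set G1 := insert (i+1) (G.erase i) with hG1
  have hiB1 : i ∉ B1 := by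
    simp only [hB1, Finset.mem_insert, Finset.mem_erase]
    push_neg
    exact ⟨hii, fun h => absurd rfl h⟩
  have hiG1 : i ∉ G1 := by
    simp only [hG1, Finset.mem_insert, Finset.mem_erase]
    push_neg
    exact ⟨hii, fun h => absurd rfl h⟩
  have h1G1 : i + 1 ∈ G1 := Finset.mem_insert_self _ _
  have step1 : fLin i (uS (B, G)) = uS (B, G1) + vv • uS (B1, G) := by
    rw [fLin_uS]
    simp only [fAct, if_pos (show i ∈ (B,G).2 ∧ i + 1 ∉ (B,G).2 from ⟨hiG, h1G⟩),
      if_pos (show i ∈ (B,G).1 ∧ i + 1 ∉ (B,G).1 from ⟨hiB, h1B⟩),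
      if_pos hiG, if_neg h1G]
    norm_num
    rfl
  have step2 : fLin i (uS (B, G1)) = vv⁻¹ • uS (B1, G1) := by
    rw [fLin_uS]
    simp only [fAct]
    rw [if_neg (show ¬(i ∈ (B,G1).2 ∧ i + 1 ∉ (B,G1).2) from fun h => hiG1 h.1),
      if_pos (show i ∈ (B,G1).1 ∧ i + 1 ∉ (B,G1).1 from ⟨hiB, h1B⟩),
      if_neg (show i ∉ (B,G1).2 from hiG1), if_pos (show i + 1 ∈ (B,G1).2 from h1G1)]
    rw [show ((0:ℤ) - 1) = -1 by ring, zpow_neg_one, zero_add]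
  have step3 : fLin i (uS (B1, G)) = uS (B1, G1) := by
    rw [fLin_uS]
    simp only [fAct]
    rw [if_pos (show i ∈ (B1,G).2 ∧ i + 1 ∉ (B1,G).2 from ⟨hiG, h1G⟩),
      if_neg (show ¬(i ∈ (B1,G).1 ∧ i + 1 ∉ (B1,G).1) from fun h => hiB1 h.1)]
    simp
    rfl
  rw [step1, map_add, map_smul, step2, step3, add_smul]
  exact add_comm _ _

section Swap
variable {β γ : Finset ℤ} {j : ℤ}
  (hjβ : j ∈ β) (hjγ : j ∈ γ) (h1β : j - 1 ∉ β) (h1γ : j - 1 ∉ γ)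

include hjβ hjγ h1β h1γ

lemma swap_avoid {T : Finset (ℤ × ℤ)} (hT : T ⊆ pairsS β γ) :
    (j ∉ T.image Prod.fst) ∧ (j - 1 ∉ T.image Prod.fst) ∧
    (j ∉ T.image Prod.snd) ∧ (j - 1 ∉ T.image Prod.snd) := by
  refine ⟨?_, ?_, ?_, ?_⟩ <;>
  · intro h
    obtain ⟨p, hp, he⟩ := Finset.mem_image.mp h
    have := pairsS_avoid hjβ hjγ h1β h1γ (hT hp)
    tauto

lemma swap_shift {T : Finset (ℤ × ℤ)} (hT : T ⊆ pairsS β γ) :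
    (insert j ((swapSymbol (insert (j-1) (β.erase j)) (insert (j-1) (γ.erase j)) T).1.erase (j-1)),
     insert j ((swapSymbol (insert (j-1) (β.erase j)) (insert (j-1) (γ.erase j)) T).2.erase (j-1)))
      = swapSymbol β γ T := by
  obtain ⟨hF, hF1, hS, hS1⟩ := swap_avoid hjβ hjγ h1β h1γ hT
  unfold swapSymbol
  refine Prod.ext ?_ ?_ <;> simp only
  · ext x
    have e1 : x ∈ β → x ≠ j - 1 := fun hx e => h1β (e ▸ hx)
    have e2 : x ∈ T.image Prod.fst → x ≠ j := fun hx e => hF (e ▸ hx)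
    have e3 : x ∈ T.image Prod.fst → x ≠ j - 1 := fun hx e => hF1 (e ▸ hx)
    have e4 : x ∈ T.image Prod.snd → x ≠ j := fun hx e => hS (e ▸ hx)
    simp only [Finset.mem_insert, Finset.mem_erase, Finset.mem_union, Finset.mem_sdiff]
    constructor
    · rintro (rfl | ⟨hne, (⟨(h | ⟨h1, h2⟩), hs⟩ | hf)⟩)
      · exact Or.inl ⟨hjβ, hS⟩
      · exact absurd h hne
      · exact Or.inl ⟨h2, hs⟩
      · exact Or.inr hf
    · rintro (⟨hb, hs⟩ | hf)
      · by_cases hx : x = j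
        · exact Or.inl hx
        · exact Or.inr ⟨e1 hb, Or.inl ⟨Or.inr ⟨hx, hb⟩, hs⟩⟩
      · exact Or.inr ⟨e3 hf, Or.inr hf⟩
  · ext x
    have e1 : x ∈ γ → x ≠ j - 1 := fun hx e => h1γ (e ▸ hx)
    have e3 : x ∈ T.image Prod.snd → x ≠ j - 1 := fun hx e => hS1 (e ▸ hx)
    simp only [Finset.mem_insert, Finset.mem_erase, Finset.mem_union, Finset.mem_sdiff]
    constructor
    · rintro (rfl | ⟨hne, (⟨(h | ⟨h1, h2⟩), hs⟩ | hf)⟩)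
      · exact Or.inl ⟨hjγ, hF⟩
      · exact absurd h hne
      · exact Or.inl ⟨h2, hs⟩
      · exact Or.inr hf
    · rintro (⟨hb, hs⟩ | hf)
      · by_cases hx : x = j
        · exact Or.inl hx
        · exact Or.inr ⟨e1 hb, Or.inl ⟨Or.inr ⟨hx, hb⟩, hs⟩⟩
      · exact Or.inr ⟨e3 hf, Or.inr hf⟩

lemma swap_mem {T : Finset (ℤ × ℤ)} (hT : T ⊆ pairsS β γ) :
    j ∉ (swapSymbol (insert (j-1) (β.erase j)) (insert (j-1) (γ.erase j)) T).1 ∧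
    j - 1 ∈ (swapSymbol (insert (j-1) (β.erase j)) (insert (j-1) (γ.erase j)) T).1 ∧
    j ∉ (swapSymbol (insert (j-1) (β.erase j)) (insert (j-1) (γ.erase j)) T).2 ∧
    j - 1 ∈ (swapSymbol (insert (j-1) (β.erase j)) (insert (j-1) (γ.erase j)) T).2 := by
  obtain ⟨hF, hF1, hS, hS1⟩ := swap_avoid hjβ hjγ h1β h1γ hT
  have hjj : j ≠ j - 1 := by omega
  unfold swapSymbol
  simp only [Finset.mem_union, Finset.mem_sdiff, Finset.mem_insert, Finset.mem_erase]
  refine ⟨?_, ?_, ?_, ?_⟩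
  · rintro (⟨(h | ⟨h1, _⟩), _⟩ | hf)
    · exact hjj h
    · exact h1 rfl
    · exact hF hf
  · exact Or.inl ⟨Or.inl trivial, hS1⟩
  · rintro (⟨(h | ⟨h1, _⟩), _⟩ | hf)
    · exact hjj h
    · exact h1 rfl
    · exact hS hf
  · exact Or.inl ⟨Or.inl trivial, hF1⟩

end Swap

theorem statement3 (n k r : ℕ) (hn : 2 ≤ n) (hk : 1 ≤ k) (hkr : k + r ≤ n)
    (β γ : Finset ℤ) (hS : IsSymbol n k r β γ) (hstd : IsStandard β γ)
    (j : ℤ) (hj : 2 ≤ j) (hjβ : j ∈ β) (hjγ : j ∈ γ)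
    (hj1β : j - 1 ∉ β) (hj1γ : j - 1 ∉ γ)
    (β' γ' : Finset ℤ)
    (hβ' : β' = insert (j - 1) (β.erase j)) (hγ' : γ' = insert (j - 1) (γ.erase j)) :
    IsSymbol n k r β' γ' ∧ IsStandard β' γ' ∧
    pairsS β' γ' = pairsS β γ ∧
    Set.BijOn (fun σ : Finset ℤ × Finset ℤ =>
        (insert j (σ.1.erase (j - 1)), insert j (σ.2.erase (j - 1))))
      (CSet β' γ' : Set (Finset ℤ × Finset ℤ)) (CSet β γ : Set (Finset ℤ × Finset ℤ)) ∧
    (∀ T ∈ (pairsS β' γ').powerset,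
        (insert j ((swapSymbol β' γ' T).1.erase (j - 1)),
         insert j ((swapSymbol β' γ' T).2.erase (j - 1))) = swapSymbol β γ T) ∧
    (∀ σ ∈ CSet β' γ',
        fLin (j - 1) (fLin (j - 1) (uS σ)) =
          (vv + vv⁻¹) • uS (insert j (σ.1.erase (j - 1)), insert j (σ.2.erase (j - 1)))) ∧
    fDiv (j - 1) 2 (bS β' γ') = bS β γ := by
  subst hβ' hγ'
  obtain ⟨hβI, hγI, hβc, hγc⟩ := hS
  have hjIcc := hβI hjβ
  rw [Finset.mem_Icc] at hjIcc
  have hpairs : pairsS (insert (j-1) (β.erase j)) (insert (j-1) (γ.erase j)) = pairsS β γ :=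
    pairsS_prime hjβ hjγ hj1β hj1γ
  have hswap : ∀ T ∈ (pairsS (insert (j-1) (β.erase j)) (insert (j-1) (γ.erase j))).powerset,
      (insert j ((swapSymbol (insert (j-1) (β.erase j)) (insert (j-1) (γ.erase j)) T).1.erase (j-1)),
       insert j ((swapSymbol (insert (j-1) (β.erase j)) (insert (j-1) (γ.erase j)) T).2.erase (j-1)))
        = swapSymbol β γ T := by
    intro T hT
    rw [Finset.mem_powerset, hpairs] at hT
    exact swap_shift hjβ hjγ hj1β hj1γ hT
  have hdouble : ∀ T ∈ (pairsS β γ).powerset,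
      fLin (j-1) (fLin (j-1)
        (uS (swapSymbol (insert (j-1) (β.erase j)) (insert (j-1) (γ.erase j)) T))) =
      (vv + vv⁻¹) • uS (swapSymbol β γ T) := by
    intro T hT
    rw [Finset.mem_powerset] at hT
    obtain ⟨m1, m2, m3, m4⟩ := swap_mem hjβ hjγ hj1β hj1γ hT
    have hj1 : j - 1 + 1 = j := by ring
    have hd := double_act (j-1) _ m2 m4 (by rw [hj1]; exact m1) (by rw [hj1]; exact m3)
    rw [hd, hj1]
    have hs := swap_shift hjβ hjγ hj1β hj1γ hT
    rw [← hs]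
  refine ⟨⟨?_, ?_, ?_, ?_⟩, ?_, hpairs, ⟨?_, ?_, ?_⟩, hswap, ?_, ?_⟩
  · -- β' ⊆ Icc
    intro x hx
    rcases Finset.mem_insert.mp hx with rfl | hx
    · rw [Finset.mem_Icc]; omega
    · exact hβI (Finset.mem_of_mem_erase hx)
  · intro x hx
    rcases Finset.mem_insert.mp hx with rfl | hx
    · rw [Finset.mem_Icc]; omega
    · exact hγI (Finset.mem_of_mem_erase hx)
  · rw [card_shift β j hjβ hj1β]; exact hβc
  · rw [card_shift γ j hjγ hj1γ]; exact hγc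
  · -- IsStandard
    intro i hi
    rw [card_shift γ j hjγ hj1γ] at hi
    have hiγ : i < (γ.sort (· ≤ ·)).length := by rwa [Finset.length_sort]
    have hiβ : i < (β.sort (· ≤ ·)).length := by
      rw [Finset.length_sort]; omega
    rw [sort_shift β j hjβ hj1β, sort_shift γ j hjγ hj1γ]
    rw [getBang _ _ (by simpa using hiβ), getBang _ _ (by simpa using hiγ)]
    rw [List.getElem_map, List.getElem_map]
    have hb := hstd i (by rwa [hγc] at hi ⊢)
    rw [getBang _ _ hiβ, getBang _ _ hiγ] at hb
    simp only [shiftF]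
    split_ifs <;> omega
  · -- MapsTo
    intro σ hσ
    rw [Finset.mem_coe, CSet, Finset.mem_image] at hσ
    obtain ⟨T, hT, rfl⟩ := hσ
    rw [Finset.mem_coe, CSet, Finset.mem_image]
    refine ⟨T, by rwa [Finset.mem_powerset, hpairs, ← Finset.mem_powerset] at hT, ?_⟩
    exact (hswap T hT).symm
  · -- InjOn
    intro σ hσ τ hτ heq
    rw [Finset.mem_coe, CSet, Finset.mem_image] at hσ hτ
    obtain ⟨T, hT, rfl⟩ := hσ
    obtain ⟨U, hU, rfl⟩ := hτ
    rw [Finset.mem_powerset, hpairs] at hT hU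
    obtain ⟨mT1, mT2, mT3, mT4⟩ := swap_mem hjβ hjγ hj1β hj1γ hT
    obtain ⟨mU1, mU2, mU3, mU4⟩ := swap_mem hjβ hjγ hj1β hj1γ hU
    have h1 := congrArg Prod.fst heq
    have h2 := congrArg Prod.snd heq
    simp only at h1 h2
    refine Prod.ext ?_ ?_
    · rw [← recovery _ j mT1 mT2, h1, recovery _ j mU1 mU2]
    · rw [← recovery _ j mT3 mT4, h2, recovery _ j mU3 mU4]
  · -- SurjOn
    intro σ hσ
    rw [Finset.mem_coe, CSet, Finset.mem_image] at hσ
    obtain ⟨T, hT, rfl⟩ := hσ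
    refine ⟨swapSymbol (insert (j-1) (β.erase j)) (insert (j-1) (γ.erase j)) T, ?_, ?_⟩
    · rw [Finset.mem_coe, CSet, Finset.mem_image]
      exact ⟨T, by rwa [Finset.mem_powerset, ← hpairs, ← Finset.mem_powerset] at hT, rfl⟩
    · exact hswap T (by rwa [Finset.mem_powerset, ← hpairs, ← Finset.mem_powerset] at hT)
  · -- fLin fLin on CSet
    intro σ hσ
    rw [CSet, Finset.mem_image] at hσ
    obtain ⟨T, hT, rfl⟩ := hσ
    have hT' : T ∈ (pairsS β γ).powerset := by
      rwa [Finset.mem_powerset, hpairs, ← Finset.mem_powerset] at hT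
    rw [hdouble T hT', hswap T hT]
  · -- fDiv
    have hne : (vv + vv⁻¹) ≠ 0 := vv_add_inv_ne
    rw [fDiv, if_pos rfl]
    rw [LinearMap.smul_apply, LinearMap.comp_apply]
    simp only [bS]
    rw [hpairs]
    rw [map_sum, map_sum, Finset.smul_sum]
    refine Finset.sum_congr rfl ?_
    intro T hT
    rw [map_smul, map_smul, hdouble T hT]
    rw [smul_smul, smul_smul]
    congr 1
    rw [mul_comm, ← mul_assoc, mul_inv_cancel₀ hne, one_mul]

end LM2003
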